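/- Let θ_1, …, θ_n ∈ ℝ satisfy Σ_{t=2}^n |θ_t − θ_{t−1}| ≤ C, let σ > 0 and κ ≥ 1, and for each time t let θ̄^{(t)}_{s} = (θ_t + θ_{t−1} + … + θ_{t−s+1})/s denote the backward average of length s ≤ t, S(r) = {1, 2, 4, …, 2^{⌊log₂ r⌋}}, and U_t(r) = max( max_{s ∈ S(r)} |θ̄^{(t)}_{s} − θ_t|, σ/√r ). Suppose estimates θ̂_1, …, θ̂_n satisfy the point-wise guarantee |θ̂_t − θ_t| ≤ κ·min_{r ∈ {1, …, t}} U_t(r) for every t ∈ {1, …, n}. Then the absolute-error risk satisfies Σ_{t=1}^n |θ̂_t − θ_t| ≤ 2·κ·σ·√( n·max( 1, 4^{2/3}·n^{1/3}·C^{2/3}·σ^{−2/3} ) ); in particular Σ_{t=1}^n |θ̂_t − θ_t| = O( κ·( n^{2/3}·C^{1/3}·σ^{2/3} + σ·√n ) ), matching the minimax rate for total-variation denoising up to logarithmic factors. -/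

import Mathlib

lemma aux_sum_inv_sqrt_le (l : ℕ) :
    ∑ r ∈ Finset.Icc 1 l, (1 : ℝ) / Real.sqrt r ≤ 2 * Real.sqrt l := by
  induction l with
  | zero => simp
  | succ k ih =>
    rw [Finset.sum_Icc_succ_top (by omega)]
    have h1 : (0:ℝ) < Real.sqrt ((k:ℝ)+1) := Real.sqrt_pos.mpr (by positivity)
    have h3 : Real.sqrt ((k:ℝ)+1) ^ 2 = (k:ℝ)+1 := Real.sq_sqrt (by positivity)
    have h4 : Real.sqrt (k:ℝ) ^ 2 = (k:ℝ) := Real.sq_sqrt (by positivity)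
    have key : 1 / Real.sqrt ((k:ℝ)+1) ≤ 2 * Real.sqrt ((k:ℝ)+1) - 2 * Real.sqrt (k:ℝ) := by
      rw [div_le_iff₀ h1]
      nlinarith [Real.sqrt_nonneg (k:ℝ), Real.sqrt_nonneg ((k:ℝ)+1),
        sq_nonneg (Real.sqrt ((k:ℝ)+1) - Real.sqrt (k:ℝ))]
    push_cast
    push_cast at ih
    linarith

lemma aux_abs_sub_le_tv (θ : ℕ → ℝ) (u t : ℕ) (h : u ≤ t) :
    |θ t - θ u| ≤ ∑ v ∈ Finset.Icc (u+1) t, |θ v - θ (v-1)| := by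
  induction t with
  | zero =>
    interval_cases u
    simp
  | succ k ih =>
    rcases Nat.eq_or_lt_of_le h with h' | h'
    · subst h'; simp
    · have hk : u ≤ k := by omega
      rw [Finset.sum_Icc_succ_top (by omega)]
      have h1 := ih hk
      have h2 : |θ (k+1) - θ u| ≤ |θ (k+1) - θ k| + |θ k - θ u| := abs_sub_le _ _ _
      simp only [Nat.add_sub_cancel]
      linarith

lemma aux_cs_sqrt (k : ℕ) (L : ℕ → ℝ) (hL : ∀ j ∈ Finset.range k, 0 ≤ L j) :
    ∑ j ∈ Finset.range k, Real.sqrt (L j) ≤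
      Real.sqrt ((k : ℝ) * ∑ j ∈ Finset.range k, L j) := by
  have hS : 0 ≤ ∑ j ∈ Finset.range k, L j := Finset.sum_nonneg hL
  rw [Real.le_sqrt (Finset.sum_nonneg fun j _ => Real.sqrt_nonneg _) (by positivity)]
  have h1 := Finset.sum_mul_sq_le_sq_mul_sq (Finset.range k) (fun _ => (1:ℝ))
    (fun j => Real.sqrt (L j))
  simp only [one_mul, one_pow, Finset.sum_const, Finset.card_range, nsmul_eq_mul,
    mul_one] at h1
  refine le_trans h1 ?_
  apply mul_le_mul_of_nonneg_left _ (by positivity)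
  apply le_of_eq
  exact Finset.sum_congr rfl fun j hj => Real.sq_sqrt (hL j hj)

theorem stmt_16 (n : ℕ) (hn : 0 < n) (θ θhat : ℕ → ℝ) (C σ κ : ℝ)
    (hσ : 0 < σ) (hκ : 1 ≤ κ)
    (hTV : ∑ t ∈ Finset.Icc 2 n, |θ t - θ (t - 1)| ≤ C)
    (hpt : ∀ t ∈ Finset.Icc 1 n, ∀ r ∈ Finset.Icc 1 t,
      |θhat t - θ t| ≤ κ *
        max ((Finset.range (Nat.log 2 r + 1)).sup'
            (Finset.nonempty_range_iff.mpr (Nat.succ_ne_zero _))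
            (fun i => |(∑ u ∈ Finset.Icc (t - 2 ^ i + 1) t, θ u) / (2 ^ i : ℝ) - θ t|))
          (σ / Real.sqrt r)) :
    ∑ t ∈ Finset.Icc 1 n, |θhat t - θ t| ≤
      2 * κ * σ * Real.sqrt (n *
        max 1 ((4 : ℝ) ^ ((2 : ℝ) / 3) * (n : ℝ) ^ ((1 : ℝ) / 3) * C ^ ((2 : ℝ) / 3) *
          σ ^ (-(2 : ℝ) / 3))) := by
  classical
  set V : ℕ → ℕ → ℝ := fun a b => ∑ t ∈ Finset.Icc (a+2) b, |θ t - θ (t-1)| with hVdef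
  have hVnonneg : ∀ a b, 0 ≤ V a b := fun a b => Finset.sum_nonneg fun _ _ => abs_nonneg _
  set F : ℕ → Finset ℕ :=
    fun a => (Finset.Icc (a+1) n).filter (fun b => V a b * Real.sqrt ((b:ℝ) - a) ≤ σ) with hFdef
  have hFne : ∀ a, a < n → (F a).Nonempty := by
    intro a ha
    refine ⟨a+1, Finset.mem_filter.mpr ⟨Finset.mem_Icc.mpr ⟨le_rfl, ha⟩, ?_⟩⟩
    have h0 : V a (a+1) = 0 := by
      rw [hVdef]
      simp [Finset.Icc_eq_empty_of_lt (by omega : a + 1 < a + 2)]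
    rw [h0, zero_mul]; exact hσ.le
  set step : ℕ → ℕ := fun a => if h : a < n then (F a).max' (hFne a h) else a with hstepdef
  have hstep_mem : ∀ a, a < n → step a ∈ F a := by
    intro a ha
    rw [hstepdef]; simp only [dif_pos ha]; exact Finset.max'_mem _ _
  have hstep_gt : ∀ a, a < n → a < step a := by
    intro a ha
    have := (Finset.mem_Icc.mp (Finset.mem_filter.mp (hstep_mem a ha)).1).1; omega
  have hstep_le : ∀ a, a < n → step a ≤ n := by
    intro a ha
    exact (Finset.mem_Icc.mp (Finset.mem_filter.mp (hstep_mem a ha)).1).2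
  have hstepP : ∀ a, a < n → V a (step a) * Real.sqrt ((step a : ℝ) - a) ≤ σ := by
    intro a ha
    exact (Finset.mem_filter.mp (hstep_mem a ha)).2
  have hstep_max : ∀ a, a < n → step a < n →
      σ < V a (step a + 1) * Real.sqrt ((step a : ℝ) + 1 - a) := by
    intro a ha hlt
    by_contra hcon
    push_neg at hcon
    have hmem : step a + 1 ∈ F a := by
      rw [hFdef]
      refine Finset.mem_filter.mpr ⟨Finset.mem_Icc.mpr ⟨by have := hstep_gt a ha; omega, by omega⟩, ?_⟩
      convert hcon using 3
      · rfl
      push_cast; ring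
    have h2 := Finset.le_max' (F a) _ hmem
    have h3 : step a = (F a).max' (hFne a ha) := by rw [hstepdef]; simp only [dif_pos ha]
    omega
  set f : ℕ → ℕ := fun j => step^[j] 0 with hfdef
  have hf0 : f 0 = 0 := rfl
  have hfsucc : ∀ j, f (j+1) = step (f j) := by
    intro j; rw [hfdef]; exact Function.iterate_succ_apply' _ _ _
  have hfle : ∀ j, f j ≤ n := by
    intro j
    induction j with
    | zero => omega
    | succ k ih =>
      rw [hfsucc]
      by_cases h : f k < n
      · exact hstep_le _ h
      · rw [hstepdef]; simp only [dif_neg h]; exact ih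
  have hfmin : ∀ j, min j n ≤ f j := by
    intro j
    induction j with
    | zero => omega
    | succ k ih =>
      rw [hfsucc]
      by_cases h : f k < n
      · have := hstep_gt _ h; omega
      · rw [hstepdef]; simp only [dif_neg h]
        have := hfle k; omega
  have hfn : f n = n := by have := hfmin n; have := hfle n; omega
  have hex : ∃ j, f j = n := ⟨n, hfn⟩
  set m : ℕ := Nat.find hex with hmdef
  have hmn : f m = n := Nat.find_spec hex
  have hm_lt : ∀ j, j < m → f j < n := by
    intro j hj
    have h1 := Nat.find_min hex hj
    have := hfle j
    omega
  have hm1 : 1 ≤ m := by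
    rcases Nat.eq_zero_or_pos m with h | h
    · exfalso; rw [h] at hmn; rw [hf0] at hmn; omega
    · exact h
  clear hmdef
  clear_value m
  -- block facts
  have hB1 : ∀ j, j < m → f j < f (j+1) := by
    intro j hj; rw [hfsucc]; exact hstep_gt _ (hm_lt j hj)
  have hB2 : ∀ j, j < m → f (j+1) ≤ n := by
    intro j hj; rw [hfsucc]; exact hstep_le _ (hm_lt j hj)
  have hB3 : ∀ j, j < m → V (f j) (f (j+1)) * Real.sqrt ((f (j+1) : ℝ) - f j) ≤ σ := by
    intro j hj; rw [hfsucc]; exact hstepP _ (hm_lt j hj)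
  have hB4 : ∀ j, j + 1 < m →
      σ < V (f j) (f (j+1) + 1) * Real.sqrt ((f (j+1) : ℝ) + 1 - f j) := by
    intro j hj
    have h1 : f j < n := hm_lt j (by omega)
    have h2 : f (j+1) < n := hm_lt (j+1) hj
    rw [hfsucc]
    rw [hfsucc] at h2
    exact hstep_max _ h1 h2
  -- monotonicity of f
  have hfmono : Monotone f := by
    apply monotone_nat_of_le_succ
    intro j
    rw [hfsucc]
    by_cases h : f j < n
    · exact (hstep_gt _ h).le
    · rw [hstepdef]; simp only [dif_neg h]; exact le_rfl
  -- per-block bound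
  have hblock : ∀ j, j < m → ∑ t ∈ Finset.Ioc (f j) (f (j+1)), |θhat t - θ t| ≤
      2 * κ * σ * Real.sqrt ((f (j+1) : ℝ) - f j) := by
    intro j hj
    have hab : f j < f (j+1) := hB1 j hj
    have hbn : f (j+1) ≤ n := hB2 j hj
    have hP : V (f j) (f (j+1)) * Real.sqrt ((f (j+1):ℝ) - f j) ≤ σ := hB3 j hj
    set a := f j with ha
    set b := f (j+1) with hb
    clear_value a b
    have hba : (0:ℝ) < (b:ℝ) - a := by
      have : (a:ℝ) < b := by exact_mod_cast hab
      linarith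
    have hsqab : (0:ℝ) < Real.sqrt ((b:ℝ) - a) := Real.sqrt_pos.mpr hba
    have hVab : V a b ≤ σ / Real.sqrt ((b:ℝ) - a) := by
      rw [le_div_iff₀ hsqab]; exact hP
    have hpt' : ∀ t ∈ Finset.Ioc a b, |θhat t - θ t| ≤ κ * (σ / Real.sqrt ((t:ℝ) - a)) := by
      intro t ht
      obtain ⟨hta, htb⟩ := Finset.mem_Ioc.mp ht
      have htn : t ≤ n := le_trans htb hbn
      have ht1 : 1 ≤ t := by omega
      have hr1 : 1 ≤ t - a := by omega
      have hrt : t - a ≤ t := by omega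
      have hcast : ((t - a : ℕ) : ℝ) = (t:ℝ) - a := by
        push_cast [Nat.cast_sub hta.le]; ring
      have hsr : (0:ℝ) < Real.sqrt ((t - a : ℕ) : ℝ) := Real.sqrt_pos.mpr (by
        rw [hcast]
        have : (a:ℝ) < t := by exact_mod_cast hta
        linarith)
      have hmain := hpt t (Finset.mem_Icc.mpr ⟨ht1, htn⟩) (t - a) (Finset.mem_Icc.mpr ⟨hr1, hrt⟩)
      have hVr : V a b ≤ σ / Real.sqrt ((t - a : ℕ) : ℝ) := by
        refine le_trans hVab ?_
        apply div_le_div_of_nonneg_left hσ.le hsr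
        apply Real.sqrt_le_sqrt
        rw [hcast]
        have : (t:ℝ) ≤ b := by exact_mod_cast htb
        linarith
      have hsup : ∀ i ∈ Finset.range (Nat.log 2 (t - a) + 1),
          |(∑ u ∈ Finset.Icc (t - 2 ^ i + 1) t, θ u) / (2 ^ i : ℝ) - θ t| ≤
            σ / Real.sqrt ((t - a : ℕ) : ℝ) := by
        intro i hi
        have hi' : i ≤ Nat.log 2 (t - a) := by
          have := Finset.mem_range.mp hi; omega
        have hpow : 2 ^ i ≤ t - a :=
          le_trans (Nat.pow_le_pow_right (by norm_num) hi') (Nat.pow_log_le_self 2 (by omega))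
        have hk1 : 1 ≤ 2 ^ i := Nat.one_le_two_pow
        have hkt : 2 ^ i ≤ t := le_trans hpow hrt
        have hwin : ∀ u ∈ Finset.Icc (t - 2 ^ i + 1) t, |θ u - θ t| ≤ V a b := by
          intro u hu
          obtain ⟨hu1, hu2⟩ := Finset.mem_Icc.mp hu
          rw [abs_sub_comm]
          refine le_trans (aux_abs_sub_le_tv θ u t hu2) ?_
          rw [hVdef]
          apply Finset.sum_le_sum_of_subset_of_nonneg
          · exact Finset.Icc_subset_Icc (by omega) htb
          · intros; exact abs_nonneg _
        have hkpos : (0:ℝ) < (2 ^ i : ℝ) := by positivity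
        have hcard : ((Finset.Icc (t - 2 ^ i + 1) t).card : ℝ) = (2 ^ i : ℝ) := by
          rw [Nat.card_Icc]
          have : t + 1 - (t - 2 ^ i + 1) = 2 ^ i := by omega
          rw [this]
          push_cast; ring
        have e1 : (∑ u ∈ Finset.Icc (t - 2 ^ i + 1) t, θ u) / (2 ^ i : ℝ) - θ t
            = (∑ u ∈ Finset.Icc (t - 2 ^ i + 1) t, (θ u - θ t)) / (2 ^ i : ℝ) := by
          rw [Finset.sum_sub_distrib, Finset.sum_const, nsmul_eq_mul, hcard]
          field_simp
        refine le_trans ?_ hVr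
        rw [e1, abs_div, abs_of_pos hkpos, div_le_iff₀ hkpos]
        calc |∑ u ∈ Finset.Icc (t - 2 ^ i + 1) t, (θ u - θ t)|
            ≤ ∑ u ∈ Finset.Icc (t - 2 ^ i + 1) t, |θ u - θ t| :=
              Finset.abs_sum_le_sum_abs _ _
          _ ≤ ∑ u ∈ Finset.Icc (t - 2 ^ i + 1) t, V a b := Finset.sum_le_sum hwin
          _ = V a b * (2 ^ i : ℝ) := by
              rw [Finset.sum_const, nsmul_eq_mul, hcard]; ring
      have hmax : (Finset.range (Nat.log 2 (t - a) + 1)).sup'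
            (Finset.nonempty_range_iff.mpr (Nat.succ_ne_zero _))
            (fun i => |(∑ u ∈ Finset.Icc (t - 2 ^ i + 1) t, θ u) / (2 ^ i : ℝ) - θ t|) ⊔
            (σ / Real.sqrt ((t - a : ℕ) : ℝ)) ≤ σ / Real.sqrt ((t - a : ℕ) : ℝ) :=
        max_le (Finset.sup'_le _ _ hsup) le_rfl
      refine le_trans hmain ?_
      rw [← hcast]
      exact mul_le_mul_of_nonneg_left hmax (by linarith)
    calc ∑ t ∈ Finset.Ioc a b, |θhat t - θ t|
        ≤ ∑ t ∈ Finset.Ioc a b, κ * (σ / Real.sqrt ((t:ℝ) - a)) := Finset.sum_le_sum hpt'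
      _ = κ * σ * ∑ t ∈ Finset.Ioc a b, 1 / Real.sqrt ((t:ℝ) - a) := by
          rw [Finset.mul_sum]
          apply Finset.sum_congr rfl
          intros; ring
      _ = κ * σ * ∑ r ∈ Finset.Icc 1 (b - a), 1 / Real.sqrt (r:ℝ) := by
          congr 1
          refine Finset.sum_nbij' (fun t => t - a) (fun r => r + a) ?_ ?_ ?_ ?_ ?_
          · intro x hx; obtain ⟨h1, h2⟩ := Finset.mem_Ioc.mp hx
            show x - a ∈ Finset.Icc 1 (b - a)
            rw [Finset.mem_Icc]; omega
          · intro x hx; obtain ⟨h1, h2⟩ := Finset.mem_Icc.mp hx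
            show x + a ∈ Finset.Ioc a b
            rw [Finset.mem_Ioc]; omega
          · intro x hx; obtain ⟨h1, h2⟩ := Finset.mem_Ioc.mp hx
            show x - a + a = x; omega
          · intro x hx
            show x + a - a = x; omega
          · intro x hx; obtain ⟨h1, h2⟩ := Finset.mem_Ioc.mp hx
            show (1:ℝ) / Real.sqrt ((x:ℝ) - a) = 1 / Real.sqrt ((x - a : ℕ) : ℝ)
            congr 2
            push_cast [Nat.cast_sub h1.le]; ring
      _ ≤ κ * σ * (2 * Real.sqrt ((b - a : ℕ) : ℝ)) := by
          apply mul_le_mul_of_nonneg_left (aux_sum_inv_sqrt_le (b - a)) (by positivity)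
      _ = 2 * κ * σ * Real.sqrt ((b:ℝ) - a) := by
          rw [Nat.cast_sub hab.le]; ring
  -- decomposition
  have hdecomp : ∑ t ∈ Finset.Icc 1 n, |θhat t - θ t| =
      ∑ j ∈ Finset.range m, ∑ t ∈ Finset.Ioc (f j) (f (j+1)), |θhat t - θ t| := by
    have key : ∀ k, k ≤ m → ∑ j ∈ Finset.range k, ∑ t ∈ Finset.Ioc (f j) (f (j+1)),
        |θhat t - θ t| = ∑ t ∈ Finset.Ioc 0 (f k), |θhat t - θ t| := by
      intro k hk
      induction k with
      | zero => simp [hf0]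
      | succ l ih =>
        rw [Finset.sum_range_succ, ih (by omega)]
        exact Finset.sum_Ioc_consecutive _ (by rw [← hf0]; exact hfmono (Nat.zero_le l))
          (hfmono (by omega))
    rw [key m le_rfl, hmn, ← Finset.Icc_add_one_left_eq_Ioc]; rfl
  -- count bound
  have hmbound : (m : ℝ) ≤ max 1 ((4 : ℝ) ^ ((2 : ℝ) / 3) * (n : ℝ) ^ ((1 : ℝ) / 3) *
      C ^ ((2 : ℝ) / 3) * σ ^ (-(2 : ℝ) / 3)) := by
    rcases Nat.lt_or_ge m 2 with hm2 | hm2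
    · have hm1' : m = 1 := by omega
      rw [hm1']
      exact le_trans (by norm_num) (le_max_left _ _)
    · set μ := m - 1 with hμdef
      have hμ1 : 1 ≤ μ := by omega
      have hμm : μ < m := by omega
      -- lower bound on V⁺ for each non-final block
      have hlow : ∀ j, j < μ → 1 / Real.sqrt ((f (j+1) : ℝ) - f j) ≤
          (Real.sqrt 2 / σ) * V (f j) (f (j+1) + 1) := by
        intro j hj
        have hjm : j + 1 < m := by omega
        have hL1 : (1:ℝ) ≤ (f (j+1) : ℝ) - f j := by
          have := hB1 j (by omega)
          have h' : (f j : ℝ) + 1 ≤ f (j+1) := by exact_mod_cast this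
          linarith
        have hLpos : (0:ℝ) < (f (j+1) : ℝ) - f j := by linarith
        have h4 := hB4 j hjm
        have hVpos : 0 ≤ V (f j) (f (j+1) + 1) := hVnonneg _ _
        have hup : Real.sqrt ((f (j+1) : ℝ) + 1 - f j) ≤
            Real.sqrt 2 * Real.sqrt ((f (j+1) : ℝ) - f j) := by
          rw [← Real.sqrt_mul (by norm_num)]
          apply Real.sqrt_le_sqrt
          linarith
        have h5 : σ < V (f j) (f (j+1) + 1) * (Real.sqrt 2 * Real.sqrt ((f (j+1) : ℝ) - f j)) := by
          refine lt_of_lt_of_le h4 ?_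
          exact mul_le_mul_of_nonneg_left hup hVpos
        have hsq : (0:ℝ) < Real.sqrt ((f (j+1) : ℝ) - f j) := Real.sqrt_pos.mpr hLpos
        rw [div_le_iff₀ hsq]
        rw [show Real.sqrt 2 / σ * V (f j) (f (j+1) + 1) * Real.sqrt ((f (j+1) : ℝ) - f j)
            = (Real.sqrt 2 * V (f j) (f (j+1) + 1) * Real.sqrt ((f (j+1) : ℝ) - f j)) / σ
            from by ring, le_div_iff₀ hσ]
        nlinarith [h5]
      -- sum of the V⁺ is at most C
      have hsumV : ∀ k, k ≤ μ → ∑ j ∈ Finset.range k, V (f j) (f (j+1) + 1) ≤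
          ∑ t ∈ Finset.Icc 2 (f k + 1), |θ t - θ (t-1)| := by
        intro k hk
        induction k with
        | zero =>
          simp only [Finset.range_zero, Finset.sum_empty]
          exact Finset.sum_nonneg fun _ _ => abs_nonneg _
        | succ l ih =>
          rw [Finset.sum_range_succ]
          have h1 := ih (by omega)
          have e2 : V (f l) (f (l+1) + 1) =
              ∑ t ∈ Finset.Ioc (f l + 1) (f (l+1) + 1), |θ t - θ (t-1)| := by
            rw [hVdef, ← Finset.Icc_add_one_left_eq_Ioc]; rfl
          have e3 : ∑ t ∈ Finset.Icc 2 (f l + 1), |θ t - θ (t-1)| =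
              ∑ t ∈ Finset.Ioc 1 (f l + 1), |θ t - θ (t-1)| := by
            rw [← Finset.Icc_add_one_left_eq_Ioc]; rfl
          have e4 : ∑ t ∈ Finset.Icc 2 (f (l+1) + 1), |θ t - θ (t-1)| =
              ∑ t ∈ Finset.Ioc 1 (f (l+1) + 1), |θ t - θ (t-1)| := by
            rw [← Finset.Icc_add_one_left_eq_Ioc]; rfl
          rw [e2, e4]
          rw [← Finset.sum_Ioc_consecutive (fun t => |θ t - θ (t-1)|)
            (by omega : 1 ≤ f l + 1)
            (by have := hfmono (by omega : l ≤ l + 1); omega)]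
          rw [e3] at h1
          linarith
      have hVC : ∑ j ∈ Finset.range μ, V (f j) (f (j+1) + 1) ≤ C := by
        refine le_trans (hsumV μ le_rfl) (le_trans ?_ hTV)
        apply Finset.sum_le_sum_of_subset_of_nonneg
        · apply Finset.Icc_subset_Icc le_rfl
          have := hm_lt μ hμm; omega
        · intros; exact abs_nonneg _
      -- sum of inverse sqrt lengths
      have hs : ∑ j ∈ Finset.range μ, 1 / Real.sqrt ((f (j+1) : ℝ) - f j) ≤
          Real.sqrt 2 * C / σ := by
        calc ∑ j ∈ Finset.range μ, 1 / Real.sqrt ((f (j+1) : ℝ) - f j)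
            ≤ ∑ j ∈ Finset.range μ, (Real.sqrt 2 / σ) * V (f j) (f (j+1) + 1) :=
              Finset.sum_le_sum fun j hj => hlow j (Finset.mem_range.mp hj)
          _ = (Real.sqrt 2 / σ) * ∑ j ∈ Finset.range μ, V (f j) (f (j+1) + 1) := by
              rw [Finset.mul_sum]
          _ ≤ (Real.sqrt 2 / σ) * C := by
              apply mul_le_mul_of_nonneg_left hVC (by positivity)
          _ = Real.sqrt 2 * C / σ := by ring
      -- C is positive
      have hLpos : ∀ j, j < μ → (0:ℝ) < (f (j+1) : ℝ) - f j := by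
        intro j hj
        have := hB1 j (by omega)
        have h' : (f j : ℝ) < f (j+1) := by exact_mod_cast this
        linarith
      have hspos : (0:ℝ) < ∑ j ∈ Finset.range μ, 1 / Real.sqrt ((f (j+1) : ℝ) - f j) := by
        apply Finset.sum_pos
        · intro j hj
          have := hLpos j (Finset.mem_range.mp hj)
          positivity
        · exact ⟨0, Finset.mem_range.mpr (by omega)⟩
      have hC : (0:ℝ) < C := by
        by_contra hc
        push_neg at hc
        have : Real.sqrt 2 * C / σ ≤ 0 := by
          apply div_nonpos_of_nonpos_of_nonneg _ hσ.le
          have : (0:ℝ) ≤ Real.sqrt 2 := Real.sqrt_nonneg _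
          nlinarith
        linarith
      -- Cauchy–Schwarz: μ² ≤ q * s
      have hcs : ((μ:ℝ)) ^ 2 ≤
          (∑ j ∈ Finset.range μ, Real.sqrt ((f (j+1) : ℝ) - f j)) *
          (∑ j ∈ Finset.range μ, 1 / Real.sqrt ((f (j+1) : ℝ) - f j)) := by
        have h1 := Finset.sum_mul_sq_le_sq_mul_sq (Finset.range μ)
          (fun j => Real.sqrt (Real.sqrt ((f (j+1) : ℝ) - f j)))
          (fun j => 1 / Real.sqrt (Real.sqrt ((f (j+1) : ℝ) - f j)))
        have e1 : ∀ j ∈ Finset.range μ,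
            Real.sqrt (Real.sqrt ((f (j+1) : ℝ) - f j)) *
              (1 / Real.sqrt (Real.sqrt ((f (j+1) : ℝ) - f j))) = 1 := by
          intro j hj
          have h2 := hLpos j (Finset.mem_range.mp hj)
          have : (0:ℝ) < Real.sqrt (Real.sqrt ((f (j+1) : ℝ) - f j)) := by positivity
          field_simp
        have e2 : ∀ j ∈ Finset.range μ,
            Real.sqrt (Real.sqrt ((f (j+1) : ℝ) - f j)) ^ 2 =
              Real.sqrt ((f (j+1) : ℝ) - f j) := fun j hj =>
          Real.sq_sqrt (Real.sqrt_nonneg _)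
        have e3 : ∀ j ∈ Finset.range μ,
            (1 / Real.sqrt (Real.sqrt ((f (j+1) : ℝ) - f j))) ^ 2 =
              1 / Real.sqrt ((f (j+1) : ℝ) - f j) := by
          intro j hj
          rw [div_pow, one_pow, Real.sq_sqrt (Real.sqrt_nonneg _)]
        rw [Finset.sum_congr rfl e1, Finset.sum_congr rfl e2, Finset.sum_congr rfl e3] at h1
        simpa using h1
      -- q ≤ √(μ n)
      have hq : ∑ j ∈ Finset.range μ, Real.sqrt ((f (j+1) : ℝ) - f j) ≤
          Real.sqrt ((μ:ℝ) * n) := by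
        refine le_trans (aux_cs_sqrt μ _ (fun j hj => (hLpos j (Finset.mem_range.mp hj)).le)) ?_
        apply Real.sqrt_le_sqrt
        apply mul_le_mul_of_nonneg_left _ (by positivity)
        have e5 : ∑ j ∈ Finset.range μ, ((f (j+1) : ℝ) - f j) = (f μ : ℝ) - f 0 :=
          Finset.sum_range_sub (fun j => (f j : ℝ)) μ
        rw [e5, hf0]
        have : f μ ≤ n := hfle μ
        have : (f μ : ℝ) ≤ n := by exact_mod_cast this
        push_cast
        linarith
      -- combine to μ³ σ² ≤ 2 n C²
      have hμpos : (0:ℝ) < μ := by exact_mod_cast hμ1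
      have hnn : (0:ℝ) ≤ (μ:ℝ) * n := by positivity
      have hkey : ((μ:ℝ)) ^ 2 ≤ Real.sqrt ((μ:ℝ) * n) * (Real.sqrt 2 * C / σ) := by
        refine le_trans hcs ?_
        have hqnn : (0:ℝ) ≤ ∑ j ∈ Finset.range μ, Real.sqrt ((f (j+1) : ℝ) - f j) :=
          Finset.sum_nonneg fun j _ => Real.sqrt_nonneg _
        calc (∑ j ∈ Finset.range μ, Real.sqrt ((f (j+1) : ℝ) - f j)) *
            (∑ j ∈ Finset.range μ, 1 / Real.sqrt ((f (j+1) : ℝ) - f j))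
            ≤ (∑ j ∈ Finset.range μ, Real.sqrt ((f (j+1) : ℝ) - f j)) *
              (Real.sqrt 2 * C / σ) := mul_le_mul_of_nonneg_left hs hqnn
          _ ≤ Real.sqrt ((μ:ℝ) * n) * (Real.sqrt 2 * C / σ) := by
              apply mul_le_mul_of_nonneg_right hq
              positivity
      have hcube : ((μ:ℝ)) ^ 3 * σ ^ 2 ≤ 2 * n * C ^ 2 := by
        have h6 : (((μ:ℝ)) ^ 2) ^ 2 ≤ (Real.sqrt ((μ:ℝ) * n) * (Real.sqrt 2 * C / σ)) ^ 2 := by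
          apply pow_le_pow_left₀ (by positivity) hkey
        have h7 : (Real.sqrt ((μ:ℝ) * n)) ^ 2 = (μ:ℝ) * n := Real.sq_sqrt hnn
        have h8 : (Real.sqrt 2) ^ 2 = 2 := Real.sq_sqrt (by norm_num)
        have h9 : (Real.sqrt ((μ:ℝ) * n) * (Real.sqrt 2 * C / σ)) ^ 2 =
            ((μ:ℝ) * n) * (2 * C ^ 2 / σ ^ 2) := by
          rw [mul_pow, h7, mul_div_assoc]
          rw [mul_pow, div_pow, h8]
          ring
        rw [h9] at h6
        have hσ2 : (0:ℝ) < σ ^ 2 := by positivity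
        have h6' : ((μ:ℝ)) ^ 4 * σ ^ 2 ≤ 2 * μ * n * C ^ 2 := by
          have h11 := mul_le_mul_of_nonneg_right h6 hσ2.le
          have h12 : ((μ:ℝ) * n * (2 * C ^ 2 / σ ^ 2)) * σ ^ 2 = 2 * μ * n * C ^ 2 := by
            field_simp
          calc ((μ:ℝ)) ^ 4 * σ ^ 2 = (((μ:ℝ)) ^ 2) ^ 2 * σ ^ 2 := by ring
              _ ≤ ((μ:ℝ) * n * (2 * C ^ 2 / σ ^ 2)) * σ ^ 2 :=
                  mul_le_mul_of_nonneg_right h6 hσ2.le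
              _ = 2 * μ * n * C ^ 2 := h12
        have h13 : (μ:ℝ) * ((μ:ℝ) ^ 3 * σ ^ 2) ≤ (μ:ℝ) * (2 * n * C ^ 2) := by
          calc (μ:ℝ) * ((μ:ℝ) ^ 3 * σ ^ 2) = ((μ:ℝ)) ^ 4 * σ ^ 2 := by ring
            _ ≤ 2 * μ * n * C ^ 2 := h6'
            _ = (μ:ℝ) * (2 * n * C ^ 2) := by ring
        exact le_of_mul_le_mul_left h13 hμpos
      have hm2μ : (m:ℝ) ≤ 2 * μ := by
        have : m ≤ 2 * μ := by omega
        exact_mod_cast this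
      have hm3 : ((m:ℝ)) ^ 3 ≤ 16 * n * C ^ 2 / σ ^ 2 := by
        have hσ2 : (0:ℝ) < σ ^ 2 := by positivity
        rw [le_div_iff₀ hσ2]
        have h10 : ((m:ℝ)) ^ 3 ≤ 8 * ((μ:ℝ)) ^ 3 := by
          calc ((m:ℝ)) ^ 3 ≤ (2 * (μ:ℝ)) ^ 3 :=
              pow_le_pow_left₀ (Nat.cast_nonneg m) hm2μ 3
            _ = 8 * ((μ:ℝ)) ^ 3 := by ring
        have h11 := mul_le_mul_of_nonneg_right h10 hσ2.le
        linarith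
      set X : ℝ := (4 : ℝ) ^ ((2 : ℝ) / 3) * (n : ℝ) ^ ((1 : ℝ) / 3) *
          C ^ ((2 : ℝ) / 3) * σ ^ (-(2 : ℝ) / 3) with hXdef
      have hXpos : 0 < X := by
        rw [hXdef]
        have h1 : (0:ℝ) < (4 : ℝ) ^ ((2 : ℝ) / 3) := Real.rpow_pos_of_pos (by norm_num) _
        have h2 : (0:ℝ) < (n : ℝ) ^ ((1 : ℝ) / 3) := Real.rpow_pos_of_pos (by positivity) _
        have h3 : (0:ℝ) < C ^ ((2 : ℝ) / 3) := Real.rpow_pos_of_pos hC _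
        have h4 : (0:ℝ) < σ ^ (-(2 : ℝ) / 3) := Real.rpow_pos_of_pos hσ _
        positivity
      have hcube' : ∀ (x : ℝ) (p : ℝ), 0 ≤ x → (x ^ p) ^ (3:ℕ) = x ^ (p * 3) := by
        intro x p hx
        rw [← Real.rpow_natCast (x ^ p) 3, ← Real.rpow_mul hx]
        norm_num
      have hX3 : X ^ (3:ℕ) = 16 * n * C ^ 2 / σ ^ 2 := by
        rw [hXdef]
        rw [mul_pow, mul_pow, mul_pow]
        rw [hcube' 4 _ (by norm_num), hcube' (n:ℝ) _ (by positivity),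
          hcube' C _ hC.le, hcube' σ _ hσ.le]
        rw [show ((2:ℝ)/3) * 3 = ((2:ℕ):ℝ) from by norm_num,
          show ((1:ℝ)/3) * 3 = ((1:ℕ):ℝ) from by norm_num,
          show (-(2:ℝ)/3) * 3 = -((2:ℕ):ℝ) from by norm_num]
        rw [Real.rpow_natCast, Real.rpow_natCast, Real.rpow_natCast,
          Real.rpow_neg hσ.le, Real.rpow_natCast]
        norm_num
        field_simp
      have hmX : (m:ℝ) ≤ X := by
        rw [← pow_le_pow_iff_left₀ (by positivity) hXpos.le (by norm_num : (3:ℕ) ≠ 0)]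
        rw [hX3]
        exact hm3
      exact le_trans hmX (le_max_right _ _)
  -- combine
  rw [hdecomp]
  have hLnn : ∀ j ∈ Finset.range m, (0:ℝ) ≤ (f (j+1) : ℝ) - f j := by
    intro j hj
    have := hB1 j (Finset.mem_range.mp hj)
    have h' : (f j : ℝ) < f (j+1) := by exact_mod_cast this
    linarith
  have hq' : ∑ j ∈ Finset.range m, Real.sqrt ((f (j+1) : ℝ) - f j) ≤
      Real.sqrt ((m:ℝ) * n) := by
    refine le_trans (aux_cs_sqrt m _ hLnn) ?_
    apply Real.sqrt_le_sqrt
    apply mul_le_mul_of_nonneg_left _ (by positivity)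
    rw [Finset.sum_range_sub (fun j => (f j : ℝ)) m, hf0, hmn]
    simp
  have h2κσ : (0:ℝ) ≤ 2 * κ * σ := by nlinarith
  calc ∑ j ∈ Finset.range m, ∑ t ∈ Finset.Ioc (f j) (f (j+1)), |θhat t - θ t|
      ≤ ∑ j ∈ Finset.range m, 2 * κ * σ * Real.sqrt ((f (j+1) : ℝ) - f j) :=
        Finset.sum_le_sum fun j hj => hblock j (Finset.mem_range.mp hj)
    _ = 2 * κ * σ * ∑ j ∈ Finset.range m, Real.sqrt ((f (j+1) : ℝ) - f j) := by
        rw [Finset.mul_sum]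
    _ ≤ 2 * κ * σ * Real.sqrt ((m:ℝ) * n) := mul_le_mul_of_nonneg_left hq' h2κσ
    _ ≤ 2 * κ * σ * Real.sqrt (n * max 1 ((4 : ℝ) ^ ((2 : ℝ) / 3) * (n : ℝ) ^ ((1 : ℝ) / 3) *
          C ^ ((2 : ℝ) / 3) * σ ^ (-(2 : ℝ) / 3))) := by
        apply mul_le_mul_of_nonneg_left _ h2κσ
        apply Real.sqrt_le_sqrt
        calc (m:ℝ) * n = (n:ℝ) * m := by ring
          _ ≤ (n:ℝ) * max 1 ((4 : ℝ) ^ ((2 : ℝ) / 3) * (n : ℝ) ^ ((1 : ℝ) / 3) *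
              C ^ ((2 : ℝ) / 3) * σ ^ (-(2 : ℝ) / 3)) :=
            mul_le_mul_of_nonneg_left hmbound (by positivity)
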